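/- Let r > 0, let h : E → [0,∞] be a Borel function, and let μ = h·π be the measure with density h with respect to π. Then μ is r-invariant for X if and only if h is not π-almost everywhere zero and h(x) = r·(P̂h)(x) for π-almost every x ∈ E, where P̂h(x) = ∫ h(xy) v̂(dy) = ∫ h(xz⁻¹) v(dz). In particular, μ * v = (P̂h)·π. -/

import Mathlib

open MeasureTheory ENNReal

noncomputable section

/-- Convolution of two Borel measures on a group. -/
def mconv {E : Type*} [Monoid E] [MeasurableSpace E] (μ ν : Measure E) : Measure E :=
  (μ.prod ν).map (fun p => p.1 * p.2)

/-- A nonzero measure `ν` is `r`-invariant for the right random walk with law `v`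
if `ν = r · (ν * v)`. -/
def IsRInvMeasure {E : Type*} [Monoid E] [MeasurableSpace E]
    (r : ℝ) (v ν : Measure E) : Prop :=
  ν ≠ 0 ∧ ν = ENNReal.ofReal r • mconv ν v

theorem withDensity_rInvariant_iff
    {E : Type*} [TopologicalSpace E] [Group E] [IsTopologicalGroup E]
    [LocallyCompactSpace E] [SecondCountableTopology E]
    [MeasurableSpace E] [BorelSpace E]
    (π : Measure E) (hπ0 : π ≠ 0) (hπreg : π.Regular)
    (hπinv : π.IsMulRightInvariant)
    (v : Measure E) [IsProbabilityMeasure v]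
    (r : ℝ) (hr : 0 < r)
    (h : E → ℝ≥0∞) (hmeas : Measurable h) :
    (IsRInvMeasure r v (π.withDensity h) ↔
      ¬ (h =ᵐ[π] 0) ∧
        ∀ᵐ x ∂π, h x =
          ENNReal.ofReal r * ∫⁻ y, h (x * y) ∂(Measure.map (fun z => z⁻¹) v)) ∧
    mconv (π.withDensity h) v =
      π.withDensity (fun x => ∫⁻ y, h (x * y) ∂(Measure.map (fun z => z⁻¹) v)) := by
  haveI : SigmaFinite π := by
    haveI := hπreg
    infer_instance
  set v' : Measure E := Measure.map (fun z : E => z⁻¹) v with hv'def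
  haveI : IsProbabilityMeasure v' := Measure.isProbabilityMeasure_map measurable_inv.aemeasurable
  set Ph : E → ℝ≥0∞ := fun x => ∫⁻ y, h (x * y) ∂v' with hPhdef
  have hPhmeas : Measurable Ph := by
    apply Measurable.lintegral_prod_right' (f := fun p : E × E => h (p.1 * p.2))
    exact hmeas.comp measurable_mul
  -- Ph in terms of v
  have hPh_v : ∀ x : E, Ph x = ∫⁻ z, h (x * z⁻¹) ∂v := by
    intro x
    have hmx : Measurable fun y : E => h (x * y) := hmeas.comp (measurable_const_mul x)
    exact lintegral_map hmx (measurable_inv : Measurable fun z : E => z⁻¹)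
  -- the key convolution identity
  have key : mconv (π.withDensity h) v = π.withDensity Ph := by
    ext s hs
    have hts : MeasurableSet ((fun p : E × E => p.1 * p.2) ⁻¹' s) := measurable_mul hs
    rw [mconv, Measure.map_apply measurable_mul hs, Measure.prod_apply hts]
    have hpre : ∀ x : E, Prod.mk x ⁻¹' ((fun p : E × E => p.1 * p.2) ⁻¹' s)
        = (fun y => x * y) ⁻¹' s := fun x => rfl
    have hmeasv : Measurable fun x => v (Prod.mk x ⁻¹' ((fun p : E × E => p.1 * p.2) ⁻¹' s)) :=
      measurable_measure_prodMk_left hts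
    rw [lintegral_withDensity_eq_lintegral_mul _ hmeas hmeasv]
    have step1 : ∀ x : E, (h * fun x => v (Prod.mk x ⁻¹' ((fun p : E × E => p.1 * p.2) ⁻¹' s))) x
        = ∫⁻ y, h x * s.indicator 1 (x * y) ∂v := by
      intro x
      have hind : ∀ y : E, s.indicator (1 : E → ℝ≥0∞) (x * y)
          = ((fun y => x * y) ⁻¹' s).indicator 1 y := by
        intro y
        by_cases hy : x * y ∈ s <;>
          simp [Set.indicator, hy, Set.mem_preimage]
      simp only [Pi.mul_apply, hpre]
      have hindmeas : Measurable fun y : E => s.indicator (1 : E → ℝ≥0∞) (x * y) :=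
        (measurable_one.indicator hs).comp (measurable_const_mul x)
      rw [lintegral_const_mul _ hindmeas]
      congr 1
      simp_rw [hind]
      rw [lintegral_indicator_one ((measurable_const_mul x) hs)]
    calc
      ∫⁻ x, (h * fun x => v (Prod.mk x ⁻¹' ((fun p : E × E => p.1 * p.2) ⁻¹' s))) x ∂π
          = ∫⁻ x, ∫⁻ y, h x * s.indicator 1 (x * y) ∂v ∂π := by
            exact lintegral_congr step1
      _ = ∫⁻ y, ∫⁻ x, h x * s.indicator 1 (x * y) ∂π ∂v := by
            apply lintegral_lintegral_swap
            exact ((hmeas.comp measurable_fst).mul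
              ((measurable_one.indicator hs).comp measurable_mul)).aemeasurable
      _ = ∫⁻ y, ∫⁻ x, h (x * y⁻¹) * s.indicator 1 x ∂π ∂v := by
            refine lintegral_congr fun y => ?_
            rw [← lintegral_mul_right_eq_self (fun x => h (x * y⁻¹) * s.indicator 1 x) y]
            simp [mul_inv_cancel_right]
      _ = ∫⁻ x, ∫⁻ y, h (x * y⁻¹) * s.indicator 1 x ∂v ∂π := by
            apply lintegral_lintegral_swap
            exact ((hmeas.comp ((measurable_snd.mul (measurable_inv.comp measurable_fst)))).mul
              ((measurable_one.indicator hs).comp measurable_snd)).aemeasurable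
      _ = ∫⁻ x, Ph x * s.indicator 1 x ∂π := by
            refine lintegral_congr fun x => ?_
            have hmx : Measurable fun y : E => h (x * y⁻¹) :=
              hmeas.comp ((measurable_const_mul x).comp measurable_inv)
            rw [lintegral_mul_const _ hmx, ← hPh_v x]
      _ = ∫⁻ x, s.indicator Ph x ∂π := by
            refine lintegral_congr fun x => ?_
            by_cases hx : x ∈ s <;> simp [Set.indicator, hx]
      _ = (π.withDensity Ph) s := by
            rw [lintegral_indicator hs, withDensity_apply _ hs]
  refine ⟨?_, key⟩
  rw [IsRInvMeasure, key, ← withDensity_smul _ hPhmeas]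
  constructor
  · rintro ⟨hne, heq⟩
    constructor
    · intro h0
      exact hne (by rw [withDensity_eq_zero_iff hmeas.aemeasurable]; exact h0)
    · have := (withDensity_eq_iff_of_sigmaFinite hmeas.aemeasurable
        ((hPhmeas.const_smul (ENNReal.ofReal r)).aemeasurable)).mp heq
      filter_upwards [this] with x hx
      simpa [smul_eq_mul] using hx
  · rintro ⟨h0, hae⟩
    constructor
    · intro hzero
      exact h0 ((withDensity_eq_zero_iff hmeas.aemeasurable).mp hzero)
    · apply (withDensity_eq_iff_of_sigmaFinite hmeas.aemeasurable
        ((hPhmeas.const_smul (ENNReal.ofReal r)).aemeasurable)).mpr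
      filter_upwards [hae] with x hx
      simpa [smul_eq_mul] using hx
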